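/- arXiv:2201.05745 — 4 statements merged into one kernel-verified Lean document; each statement's English description precedes it below -/
import Mathlib

section
/- Let x_1, …, x_N be points in ℝ^n, let A be an n×n real symmetric positive definite matrix, let b ∈ ℝ^n, and set the target samples x̄_j := A x_j + b for j = 1, …, N. Then for every coupling with uniform marginals γ (an N×N matrix with nonnegative entries whose every row sum and every column sum equals 1/N), one has Σ_{i,j} γ_{ij} ‖x_i − x̄_j‖² ≥ (1/N) Σ_i ‖x_i − x̄_i‖². In other words, the diagonal coupling γ = (1/N)·Id attains the minimum of the discrete Monge–Kantorovich problem with cost c(x, x̄) = ‖x − x̄‖², so the map T(x_i) = A x_i + b is an optimal transport map between the two uniform empirical distributions. -/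
open Matrix

/-- Squared Euclidean norm of a vector in ℝ^n. -/
noncomputable def sqnorm {n : ℕ} (v : Fin n → ℝ) : ℝ := ∑ k, (v k) ^ 2

/-- For source samples `x_i`, SPD matrix `A`, bias `b`, and targets `x̄_j = A x_j + b`,
every coupling `γ` with uniform marginals transports at cost at least that of the diagonal
coupling, for the squared Euclidean cost. -/
theorem diagonal_coupling_optimal_affine
    {n N : ℕ} (x : Fin N → Fin n → ℝ)
    (A : Matrix (Fin n) (Fin n) ℝ) (hA : A.PosDef)
    (b : Fin n → ℝ)
    (xbar : Fin N → Fin n → ℝ) (hxbar : ∀ j, xbar j = A.mulVec (x j) + b)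
    (γ : Matrix (Fin N) (Fin N) ℝ)
    (hγnonneg : ∀ i j, 0 ≤ γ i j)
    (hrow : ∀ i, ∑ j, γ i j = 1 / (N : ℝ))
    (hcol : ∀ j, ∑ i, γ i j = 1 / (N : ℝ)) :
    (1 / (N : ℝ)) * ∑ i, sqnorm (x i - xbar i) ≤ ∑ i, ∑ j, γ i j * sqnorm (x i - xbar j) := by
  classical
  have hAT : Aᵀ = A := by have h := hA.isHermitian; simp at h; exact h
  set y : Fin N → Fin n → ℝ := fun i => A.mulVec (x i) with hy
  -- symmetry of the bilinear form
  have hsym : ∀ i j, x i ⬝ᵥ y j = x j ⬝ᵥ y i := by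
    intro i j
    calc x i ⬝ᵥ y j = (x i ᵥ* A) ⬝ᵥ x j := by rw [dotProduct_mulVec]
      _ = (Aᵀ *ᵥ x i) ⬝ᵥ x j := by rw [mulVec_transpose]
      _ = (A *ᵥ x i) ⬝ᵥ x j := by rw [hAT]
      _ = x j ⬝ᵥ y i := dotProduct_comm _ _
  -- positive semidefiniteness
  have hpsd : ∀ i j, 0 ≤ (x i - x j) ⬝ᵥ A.mulVec (x i - x j) := by
    intro i j
    simpa using hA.posSemidef.re_dotProduct_nonneg (x i - x j)
  have hcross : ∀ i j, x i ⬝ᵥ y j ≤ (x i ⬝ᵥ y i + x j ⬝ᵥ y j) / 2 := by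
    intro i j
    have h := hpsd i j
    have hmv : A.mulVec (x i - x j) = y i - y j := by
      simp [hy, Matrix.mulVec_sub]
    rw [hmv, sub_dotProduct, dotProduct_sub, dotProduct_sub] at h
    have hs := hsym i j
    linarith
  -- marginal summation lemmas
  have hrowsum : ∀ f : Fin N → ℝ,
      (∑ i, ∑ j, γ i j * f i) = (1 / (N : ℝ)) * ∑ i, f i := by
    intro f
    rw [Finset.mul_sum]
    refine Finset.sum_congr rfl fun i _ => ?_
    rw [← Finset.sum_mul, hrow]
  have hcolsum : ∀ f : Fin N → ℝ,
      (∑ i, ∑ j, γ i j * f j) = (1 / (N : ℝ)) * ∑ j, f j := by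
    intro f
    rw [Finset.sum_comm, Finset.mul_sum]
    refine Finset.sum_congr rfl fun j _ => ?_
    rw [← Finset.sum_mul, hcol]
  -- expansion of squared norm
  have expand : ∀ u v : Fin n → ℝ,
      sqnorm (u - v) = u ⬝ᵥ u - 2 * (u ⬝ᵥ v) + v ⬝ᵥ v := by
    intro u v
    simp only [sqnorm, dotProduct, Pi.sub_apply, Finset.mul_sum]
    rw [← Finset.sum_sub_distrib, ← Finset.sum_add_distrib]
    exact Finset.sum_congr rfl fun k _ => by ring
  have hdecomp : ∀ i j, x i ⬝ᵥ xbar j = x i ⬝ᵥ y j + x i ⬝ᵥ b := by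
    intro i j
    rw [hxbar j]
    exact dotProduct_add _ _ _
  -- the four double sums
  have h1 : (∑ i, ∑ j, γ i j * (x i ⬝ᵥ x i)) = (1 / (N : ℝ)) * ∑ i, x i ⬝ᵥ x i :=
    hrowsum _
  have h2 : (∑ i, ∑ j, γ i j * (x i ⬝ᵥ b)) = (1 / (N : ℝ)) * ∑ i, x i ⬝ᵥ b :=
    hrowsum _
  have h3 : (∑ i, ∑ j, γ i j * (xbar j ⬝ᵥ xbar j)) = (1 / (N : ℝ)) * ∑ j, xbar j ⬝ᵥ xbar j :=
    hcolsum _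
  have h4 : (∑ i, ∑ j, γ i j * (x i ⬝ᵥ y i)) = (1 / (N : ℝ)) * ∑ i, x i ⬝ᵥ y i :=
    hrowsum _
  have h5 : (∑ i, ∑ j, γ i j * (x j ⬝ᵥ y j)) = (1 / (N : ℝ)) * ∑ j, x j ⬝ᵥ y j :=
    hcolsum _
  -- key inequality
  have hkey : (∑ i, ∑ j, γ i j * (x i ⬝ᵥ y j)) ≤ (1 / (N : ℝ)) * ∑ i, x i ⬝ᵥ y i := by
    have step : (∑ i, ∑ j, γ i j * (x i ⬝ᵥ y j))
        ≤ ∑ i, ∑ j, γ i j * ((x i ⬝ᵥ y i + x j ⬝ᵥ y j) / 2) :=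
      Finset.sum_le_sum fun i _ => Finset.sum_le_sum fun j _ =>
        mul_le_mul_of_nonneg_left (hcross i j) (hγnonneg i j)
    have eq2 : (∑ i, ∑ j, γ i j * ((x i ⬝ᵥ y i + x j ⬝ᵥ y j) / 2))
        = (1/2) * (∑ i, ∑ j, γ i j * (x i ⬝ᵥ y i))
          + (1/2) * (∑ i, ∑ j, γ i j * (x j ⬝ᵥ y j)) := by
      rw [Finset.mul_sum, Finset.mul_sum, ← Finset.sum_add_distrib]
      refine Finset.sum_congr rfl fun i _ => ?_
      rw [Finset.mul_sum, Finset.mul_sum, ← Finset.sum_add_distrib]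
      exact Finset.sum_congr rfl fun j _ => by ring
    rw [eq2, h4, h5] at step
    linarith
  -- expand the RHS
  have hS : (∑ i, ∑ j, γ i j * sqnorm (x i - xbar j))
      = (∑ i, ∑ j, γ i j * (x i ⬝ᵥ x i))
        - 2 * (∑ i, ∑ j, γ i j * (x i ⬝ᵥ y j))
        - 2 * (∑ i, ∑ j, γ i j * (x i ⬝ᵥ b))
        + (∑ i, ∑ j, γ i j * (xbar j ⬝ᵥ xbar j)) := by
    rw [Finset.mul_sum, Finset.mul_sum, ← Finset.sum_sub_distrib, ← Finset.sum_sub_distrib,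
      ← Finset.sum_add_distrib]
    refine Finset.sum_congr rfl fun i _ => ?_
    rw [Finset.mul_sum, Finset.mul_sum, ← Finset.sum_sub_distrib, ← Finset.sum_sub_distrib,
      ← Finset.sum_add_distrib]
    refine Finset.sum_congr rfl fun j _ => ?_
    rw [expand, hdecomp]
    ring
  -- expand the LHS
  have hL : (∑ i, sqnorm (x i - xbar i))
      = (∑ i, x i ⬝ᵥ x i) - 2 * (∑ i, x i ⬝ᵥ y i) - 2 * (∑ i, x i ⬝ᵥ b)
        + (∑ i, xbar i ⬝ᵥ xbar i) := by
    rw [Finset.mul_sum, Finset.mul_sum, ← Finset.sum_sub_distrib, ← Finset.sum_sub_distrib,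
      ← Finset.sum_add_distrib]
    refine Finset.sum_congr rfl fun i _ => ?_
    rw [expand, hdecomp]
    ring
  rw [hS, hL, h1, h2, h3]
  linarith
end

section
/- Let S_1, …, S_N be n×n real symmetric positive definite matrices, let W be an n×n real symmetric positive definite matrix, and set the target samples S̄_j := W · S_j · Wᵀ for j = 1, …, N. Then for every coupling with uniform marginals γ (an N×N matrix with nonnegative entries whose every row sum and every column sum equals 1/N), one has Σ_{i,j} γ_{ij} ‖S_i − S̄_j‖_F² ≥ (1/N) Σ_i ‖S_i − S̄_i‖_F². Hence the diagonal coupling is optimal for the discrete Monge–Kantorovich problem on SPD matrices with the squared Frobenius (Euclidean) cost, and the Bi-Map transformation T(S) = W · S · Wᵀ is an optimal transport map between the two uniform empirical distributions. -/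
open Matrix

/-- Squared Frobenius norm of a square matrix. -/
noncomputable def frobSq {n : ℕ} (M : Matrix (Fin n) (Fin n) ℝ) : ℝ := ∑ i, ∑ j, (M i j) ^ 2

/-- Frobenius inner product. -/
noncomputable def frobIp {n : ℕ} (A B : Matrix (Fin n) (Fin n) ℝ) : ℝ :=
  ∑ i, ∑ j, A i j * B i j

lemma frobIp_eq_trace {n : ℕ} (A B : Matrix (Fin n) (Fin n) ℝ) :
    frobIp A B = Matrix.trace (Aᵀ * B) := by
  simp [frobIp, Matrix.trace, Matrix.mul_apply, Matrix.diag]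
  rw [Finset.sum_comm]

lemma frobSq_sub_expand {n : ℕ} (A B : Matrix (Fin n) (Fin n) ℝ) :
    frobSq (A - B) = frobSq A - 2 * frobIp A B + frobSq B := by
  simp only [frobSq, frobIp, Matrix.sub_apply, Finset.mul_sum, ← Finset.sum_add_distrib,
    ← Finset.sum_sub_distrib]
  congr 1; ext i; congr 1; ext j; ring

lemma frobIp_sub_left {n : ℕ} (A B C : Matrix (Fin n) (Fin n) ℝ) :
    frobIp (A - B) C = frobIp A C - frobIp B C := by
  simp only [frobIp, Matrix.sub_apply, ← Finset.sum_sub_distrib]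
  congr 1; ext i; congr 1; ext j; ring

lemma frobIp_sub_right {n : ℕ} (A B C : Matrix (Fin n) (Fin n) ℝ) :
    frobIp A (B - C) = frobIp A B - frobIp A C := by
  simp only [frobIp, Matrix.sub_apply, ← Finset.sum_sub_distrib]
  congr 1; ext i; congr 1; ext j; ring

lemma frobIp_symm_conj {n : ℕ} (X Y W : Matrix (Fin n) (Fin n) ℝ)
    (hX : Xᵀ = X) (hY : Yᵀ = Y) (hWt : Wᵀ = W) :
    frobIp X (W * Y * W) = frobIp Y (W * X * W) := by
  rw [frobIp_eq_trace, frobIp_eq_trace, hX, hY]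
  rw [show X * (W * Y * W) = (X * W) * (Y * W) by noncomm_ring,
    show Y * (W * X * W) = (Y * W) * (X * W) by noncomm_ring,
    Matrix.trace_mul_comm]

lemma frobIp_conj_nonneg {n : ℕ} (X W : Matrix (Fin n) (Fin n) ℝ)
    (hX : Xᵀ = X) (hW : W.PosSemidef) :
    0 ≤ frobIp X (W * X * W) := by
  obtain ⟨L, hLH, hLL⟩ : ∃ L : Matrix (Fin n) (Fin n) ℝ, Lᵀ = L ∧ L * L = W :=
    open scoped MatrixOrder in
    ⟨CFC.sqrt W, by open scoped MatrixOrder in (rw [← Matrix.conjTranspose_eq_transpose_of_trivial]; exact (CFC.sqrt_nonneg W).posSemidef.1),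
      CFC.sqrt_mul_sqrt_self W hW.nonneg⟩
  rw [frobIp_eq_trace, hX, ← hLL]
  have h1 : X * (L * L * X * (L * L)) = (X * (L * L) * X * L) * L := by noncomm_ring
  rw [h1, Matrix.trace_mul_comm, show L * (X * (L * L) * X * L) = (L * X * L) * (L * X * L) by
    noncomm_ring]
  have hM : (L * X * L)ᵀ = L * X * L := by
    simp [Matrix.transpose_mul, hLH, hX, Matrix.mul_assoc]
  calc (0:ℝ) ≤ frobIp (L * X * L) (L * X * L) := by
        apply Finset.sum_nonneg; intro i _; apply Finset.sum_nonneg; intro j _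
        exact mul_self_nonneg _
    _ = Matrix.trace ((L * X * L) * (L * X * L)) := by rw [frobIp_eq_trace, hM]

/-- For SPD sources `S_i`, SPD `W`, and targets `S̄_j = W · S_j · Wᵀ`, every coupling with
uniform marginals transports at squared-Frobenius cost at least that of the diagonal coupling;
hence the Bi-Map `T(S) = W S Wᵀ` is an optimal transport map. -/
theorem diagonal_coupling_optimal_biMap
    {n N : ℕ} (S : Fin N → Matrix (Fin n) (Fin n) ℝ) (hS : ∀ i, (S i).PosDef)
    (W : Matrix (Fin n) (Fin n) ℝ) (hW : W.PosDef)
    (Sbar : Fin N → Matrix (Fin n) (Fin n) ℝ) (hSbar : ∀ j, Sbar j = W * S j * Wᵀ)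
    (γ : Matrix (Fin N) (Fin N) ℝ)
    (hγnonneg : ∀ i j, 0 ≤ γ i j)
    (hrow : ∀ i, ∑ j, γ i j = 1 / (N : ℝ))
    (hcol : ∀ j, ∑ i, γ i j = 1 / (N : ℝ)) :
    (1 / (N : ℝ)) * ∑ i, frobSq (S i - Sbar i) ≤ ∑ i, ∑ j, γ i j * frobSq (S i - Sbar j) := by
  have hWt : Wᵀ = W := by
    rw [← Matrix.conjTranspose_eq_transpose_of_trivial]; exact hW.1
  have hSt : ∀ i, (S i)ᵀ = S i := fun i => by
    rw [← Matrix.conjTranspose_eq_transpose_of_trivial]; exact (hS i).1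
  have hSbar' : ∀ j, Sbar j = W * S j * W := fun j => by rw [hSbar j, hWt]
  set B : Fin N → Fin N → ℝ := fun i j => frobIp (S i) (W * S j * W) with hB
  have hBsymm : ∀ i j, B i j = B j i := fun i j =>
    frobIp_symm_conj _ _ _ (hSt i) (hSt j) hWt
  -- key pointwise bound
  have hkey : ∀ i j, 2 * B i j ≤ B i i + B j j := by
    intro i j
    have h0 := frobIp_conj_nonneg (S i - S j) W
      (by rw [Matrix.transpose_sub, hSt i, hSt j]) hW.posSemidef
    have hexp : frobIp (S i - S j) (W * (S i - S j) * W)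
        = B i i - B i j - B j i + B j j := by
      rw [show W * (S i - S j) * W = (W * S i * W) - (W * S j * W) by noncomm_ring,
        frobIp_sub_left, frobIp_sub_right, frobIp_sub_right]
      simp only [hB]; ring
    rw [hexp, hBsymm j i] at h0
    linarith
  -- expand costs
  have hcost : ∀ i j, frobSq (S i - Sbar j)
      = frobSq (S i) - 2 * B i j + frobSq (Sbar j) := by
    intro i j
    rw [frobSq_sub_expand, hB]
    rw [hSbar' j]
  -- rewrite both sides
  have hRHS : ∑ i, ∑ j, γ i j * frobSq (S i - Sbar j)
      = (1 / (N : ℝ)) * (∑ i, frobSq (S i)) + (1 / (N : ℝ)) * (∑ j, frobSq (Sbar j))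
        - 2 * ∑ i, ∑ j, γ i j * B i j := by
    have : ∀ i j, γ i j * frobSq (S i - Sbar j)
        = γ i j * frobSq (S i) + γ i j * frobSq (Sbar j) - 2 * (γ i j * B i j) := by
      intro i j; rw [hcost i j]; ring
    simp only [this, Finset.sum_add_distrib, Finset.sum_sub_distrib, ← Finset.mul_sum]
    have h1 : ∑ i, ∑ j, γ i j * frobSq (S i) = (∑ i, frobSq (S i)) * (1 / (N : ℝ)) := by
      rw [Finset.sum_mul]
      refine Finset.sum_congr rfl fun i _ => ?_
      rw [← Finset.sum_mul, hrow i, mul_comm]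
    have h2 : ∑ i, ∑ j, γ i j * frobSq (Sbar j) = (∑ j, frobSq (Sbar j)) * (1 / (N : ℝ)) := by
      rw [Finset.sum_comm, Finset.sum_mul]
      refine Finset.sum_congr rfl fun j _ => ?_
      rw [← Finset.sum_mul, hcol j, mul_comm]
    rw [h1, h2]; ring
  have hLHS : (1 / (N : ℝ)) * ∑ i, frobSq (S i - Sbar i)
      = (1 / (N : ℝ)) * (∑ i, frobSq (S i)) + (1 / (N : ℝ)) * (∑ j, frobSq (Sbar j))
        - 2 * ((1 / (N : ℝ)) * ∑ i, B i i) := by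
    have : ∑ i, frobSq (S i - Sbar i)
        = ∑ i, frobSq (S i) - 2 * ∑ i, B i i + ∑ i, frobSq (Sbar i) := by
      simp only [hcost, Finset.sum_add_distrib, Finset.sum_sub_distrib, ← Finset.mul_sum]
    rw [this]; ring
  rw [hRHS, hLHS]
  have hmain : ∑ i, ∑ j, γ i j * B i j ≤ (1 / (N : ℝ)) * ∑ i, B i i := by
    calc ∑ i, ∑ j, γ i j * B i j
        ≤ ∑ i, ∑ j, γ i j * ((B i i + B j j) / 2) := by
          refine Finset.sum_le_sum fun i _ => Finset.sum_le_sum fun j _ => ?_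
          exact mul_le_mul_of_nonneg_left (by linarith [hkey i j]) (hγnonneg i j)
      _ = (1 / (N : ℝ)) * ∑ i, B i i := by
          have : ∀ i j, γ i j * ((B i i + B j j) / 2)
              = γ i j * B i i / 2 + γ i j * B j j / 2 := by intro i j; ring
          simp only [this, Finset.sum_add_distrib]
          have h1 : ∑ i, ∑ j, γ i j * B i i / 2 = (∑ i, B i i) * (1 / (N : ℝ)) / 2 := by
            rw [Finset.sum_mul, Finset.sum_div]
            refine Finset.sum_congr rfl fun i _ => ?_
            rw [show ∑ j, γ i j * B i i / 2 = (∑ j, γ i j) * B i i / 2 by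
              rw [Finset.sum_mul, Finset.sum_div], hrow i]
            ring
          have h2 : ∑ i, ∑ j, γ i j * B j j / 2 = (∑ j, B j j) * (1 / (N : ℝ)) / 2 := by
            rw [Finset.sum_comm, Finset.sum_mul, Finset.sum_div]
            refine Finset.sum_congr rfl fun j _ => ?_
            rw [show ∑ i, γ i j * B j j / 2 = (∑ i, γ i j) * B j j / 2 by
              rw [Finset.sum_mul, Finset.sum_div], hcol j]
            ring
          rw [h1, h2]; ring
  linarith
end

section
/- Let A and B be n×n real symmetric matrices and define the curve γ(t) := exp((1 − t)·A + t·B) for t ∈ ℝ. Then γ(0) = exp(A), γ(1) = exp(B), each γ(t) is a real symmetric positive definite matrix, and for all real s, t one has d_LEM(γ(s), γ(t)) = |t − s| · ‖A − B‖_F = |t − s| · d_LEM(exp(A), exp(B)). In particular, γ is a constant-speed path realizing the Log-Euclidean distance between exp(A) and exp(B). -/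
open Matrix

/-- Frobenius norm of a square matrix. -/
noncomputable def frobNorm {n : ℕ} (M : Matrix (Fin n) (Fin n) ℝ) : ℝ := Real.sqrt (frobSq M)

/-- The (unique) symmetric matrix logarithm of a symmetric positive definite matrix:
`symLog S` is the symmetric matrix `A` with `exp A = S` whenever such a matrix exists
(which is the case exactly when `S` is SPD), and is junk (`0`) otherwise. -/
noncomputable def symLog {n : ℕ} (S : Matrix (Fin n) (Fin n) ℝ) : Matrix (Fin n) (Fin n) ℝ :=
  letI := Classical.propDecidable
    (∃ A : Matrix (Fin n) (Fin n) ℝ, A.IsSymm ∧ NormedSpace.exp A = S)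
  if h : ∃ A : Matrix (Fin n) (Fin n) ℝ, A.IsSymm ∧ NormedSpace.exp A = S then h.choose else 0

/-- The Log-Euclidean distance `d_LEM(S₁, S₂) = ‖log S₁ − log S₂‖_F` on SPD matrices. -/
noncomputable def dLEM {n : ℕ} (S₁ S₂ : Matrix (Fin n) (Fin n) ℝ) : ℝ :=
  frobNorm (symLog S₁ - symLog S₂)

open Polynomial

section Aux

variable {n : ℕ}

private lemma isHermitian_of_isSymm {A : Matrix (Fin n) (Fin n) ℝ} (h : A.IsSymm) :
    A.IsHermitian := by
  rwa [Matrix.IsHermitian, conjTranspose_eq_transpose_of_trivial]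

/-- Spectral form of the matrix exponential of a hermitian real matrix. -/
private lemma exp_spectral {A : Matrix (Fin n) (Fin n) ℝ} (hA : A.IsHermitian) :
    NormedSpace.exp A =
      (hA.eigenvectorUnitary : Matrix (Fin n) (Fin n) ℝ)
        * diagonal (fun i => Real.exp (hA.eigenvalues i))
        * star (hA.eigenvectorUnitary : Matrix (Fin n) (Fin n) ℝ) := by
  set U := (hA.eigenvectorUnitary : Matrix (Fin n) (Fin n) ℝ) with hU
  have h1 : U * star U = 1 := Matrix.mem_unitaryGroup_iff.mp hA.eigenvectorUnitary.2
  have hinv : U⁻¹ = star U := Matrix.inv_eq_right_inv h1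
  have hUnit : IsUnit U := isUnit_iff_exists.2 ⟨star U, h1, Matrix.mem_unitaryGroup_iff'.mp hA.eigenvectorUnitary.2⟩
  conv_lhs => rw [hA.spectral_theorem, Unitary.conjStarAlgAut_apply]
  rw [← hU, ← hinv, Matrix.exp_conj U _ hUnit, Matrix.exp_diagonal, hinv]
  congr 2
  ext i
  simp [Pi.exp_def, ← Real.exp_eq_exp_ℝ]

private lemma posDef_conj {U D : Matrix (Fin n) (Fin n) ℝ} (hD : D.PosDef)
    (hU : U * Uᴴ = 1) : (U * D * Uᴴ).PosDef := by
  refine Matrix.PosDef.of_dotProduct_mulVec_pos ?_ fun x hx => ?_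
  · simpa only [conjTranspose_conjTranspose] using
      (hD.posSemidef.conjTranspose_mul_mul_same Uᴴ).isHermitian
  · have hy : Uᴴ *ᵥ x ≠ 0 := by
      intro h
      apply hx
      have h2 := congrArg (U *ᵥ ·) h
      simp only [Matrix.mulVec_mulVec, hU, Matrix.one_mulVec, Matrix.mulVec_zero] at h2
      exact h2
    have := hD.dotProduct_mulVec_pos hy
    simpa only [star_mulVec, Matrix.dotProduct_mulVec, vecMul_vecMul,
      conjTranspose_conjTranspose, Matrix.mul_assoc] using this

private lemma posDef_exp {A : Matrix (Fin n) (Fin n) ℝ} (hA : A.IsHermitian) :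
    (NormedSpace.exp A).PosDef := by
  rw [exp_spectral hA, Matrix.star_eq_conjTranspose]
  exact posDef_conj (.diagonal fun i => Real.exp_pos _)
    (by simpa only [Matrix.star_eq_conjTranspose] using
      Matrix.mem_unitaryGroup_iff.mp hA.eigenvectorUnitary.2)

/-- Conjugation by a unit as an `ℝ`-algebra homomorphism on matrices. -/
private def conjAH (u : (Matrix (Fin n) (Fin n) ℝ)ˣ) :
    Matrix (Fin n) (Fin n) ℝ →ₐ[ℝ] Matrix (Fin n) (Fin n) ℝ where
  toFun x := (u : Matrix (Fin n) (Fin n) ℝ) * x * ((u⁻¹ : _ˣ) : Matrix (Fin n) (Fin n) ℝ)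
  map_one' := by show (u : Matrix (Fin n) (Fin n) ℝ) * 1 * _ = 1; rw [mul_one]; exact u.mul_inv
  map_mul' x y := by
    have h : ((u⁻¹ : _ˣ) : Matrix (Fin n) (Fin n) ℝ) * (u : Matrix (Fin n) (Fin n) ℝ) = 1 :=
      u.inv_mul
    calc (u : Matrix (Fin n) (Fin n) ℝ) * (x * y) * ((u⁻¹ : _ˣ) : Matrix (Fin n) (Fin n) ℝ)
        = ((u : Matrix (Fin n) (Fin n) ℝ) * x) *
            (((u⁻¹ : _ˣ) : Matrix (Fin n) (Fin n) ℝ) * (u : Matrix (Fin n) (Fin n) ℝ)) *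
            (y * ((u⁻¹ : _ˣ) : Matrix (Fin n) (Fin n) ℝ)) := by rw [h]; noncomm_ring
      _ = _ := by noncomm_ring
  map_zero' := by simp
  map_add' x y := by noncomm_ring
  commutes' r := by
    simp only [Algebra.algebraMap_eq_smul_one, Matrix.smul_mul, Matrix.mul_smul, mul_one,
      Units.mul_inv]

private lemma aeval_conj' (u : (Matrix (Fin n) (Fin n) ℝ)ˣ) (D : Matrix (Fin n) (Fin n) ℝ)
    (p : ℝ[X]) :
    aeval ((u : Matrix (Fin n) (Fin n) ℝ) * D * ((u⁻¹ : _ˣ) : Matrix (Fin n) (Fin n) ℝ)) p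
      = (u : Matrix (Fin n) (Fin n) ℝ) * aeval D p
          * ((u⁻¹ : _ˣ) : Matrix (Fin n) (Fin n) ℝ) :=
  Polynomial.aeval_algHom_apply (conjAH u) D p

private lemma aeval_diagonal (v : Fin n → ℝ) (p : ℝ[X]) :
    aeval (diagonal v) p = diagonal (fun i => p.eval (v i)) := by
  have h1 := Polynomial.aeval_algHom_apply
    (Matrix.diagonalAlgHom (n := Fin n) (α := ℝ) ℝ) v p
  rw [Matrix.diagonalAlgHom_apply] at h1
  have h2 : (aeval v p) = fun i => p.eval (v i) := by
    funext i
    rw [← Polynomial.coe_aeval_eq_eval]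
    exact (Polynomial.aeval_algHom_apply (Pi.evalAlgHom ℝ (fun _ => ℝ) i) v p).symm
  rw [h1, Matrix.diagonalAlgHom_apply, h2]

private lemma aeval_exp_eq {C : Matrix (Fin n) (Fin n) ℝ} (hC : C.IsHermitian) (p : ℝ[X])
    (hp : ∀ i, p.eval (Real.exp (hC.eigenvalues i)) = hC.eigenvalues i) :
    aeval (NormedSpace.exp C) p = C := by
  set U := (hC.eigenvectorUnitary : Matrix (Fin n) (Fin n) ℝ) with hUdef
  have h1 : U * star U = 1 := Matrix.mem_unitaryGroup_iff.mp hC.eigenvectorUnitary.2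
  have h2 : star U * U = 1 := Matrix.mem_unitaryGroup_iff'.mp hC.eigenvectorUnitary.2
  set u : (Matrix (Fin n) (Fin n) ℝ)ˣ := ⟨U, star U, h1, h2⟩ with hu
  have hcoe : (u : Matrix (Fin n) (Fin n) ℝ) = U := rfl
  have hinv : ((u⁻¹ : _ˣ) : Matrix (Fin n) (Fin n) ℝ) = star U := rfl
  rw [exp_spectral hC, ← hUdef, ← hcoe, ← hinv, aeval_conj', aeval_diagonal]
  simp only [hp]
  have hst := hC.spectral_theorem
  rw [Unitary.conjStarAlgAut_apply] at hst
  rw [← hUdef] at hst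
  rw [hinv]
  have hof : diagonal (fun i => hC.eigenvalues i) = diagonal (RCLike.ofReal ∘ hC.eigenvalues) := by
    congr 1
  rw [hof, ← hst]

private lemma exp_inj {A B : Matrix (Fin n) (Fin n) ℝ} (hA : A.IsHermitian)
    (hB : B.IsHermitian) (h : NormedSpace.exp A = NormedSpace.exp B) : A = B := by
  classical
  set T : Finset ℝ :=
    Finset.image hA.eigenvalues Finset.univ ∪ Finset.image hB.eigenvalues Finset.univ with hT
  set p : ℝ[X] := Lagrange.interpolate T Real.exp id with hp
  have hinj : Set.InjOn Real.exp (T : Set ℝ) := Real.exp_injective.injOn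
  have hev : ∀ x ∈ T, p.eval (Real.exp x) = x := fun x hx =>
    Lagrange.eval_interpolate_at_node id hinj hx
  have hAp : aeval (NormedSpace.exp A) p = A :=
    aeval_exp_eq hA p fun i => hev _ (Finset.mem_union_left _
      (Finset.mem_image_of_mem _ (Finset.mem_univ i)))
  have hBp : aeval (NormedSpace.exp B) p = B :=
    aeval_exp_eq hB p fun i => hev _ (Finset.mem_union_right _
      (Finset.mem_image_of_mem _ (Finset.mem_univ i)))
  rw [← hAp, ← hBp, h]

private lemma symLog_exp {C : Matrix (Fin n) (Fin n) ℝ} (hC : C.IsSymm) :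
    symLog (NormedSpace.exp C) = C := by
  have hex : ∃ A : Matrix (Fin n) (Fin n) ℝ, A.IsSymm ∧
      NormedSpace.exp A = NormedSpace.exp C := ⟨C, hC, rfl⟩
  rw [symLog, dif_pos hex]
  exact exp_inj (isHermitian_of_isSymm hex.choose_spec.1) (isHermitian_of_isSymm hC)
    hex.choose_spec.2

private lemma frobNorm_smul (c : ℝ) (M : Matrix (Fin n) (Fin n) ℝ) :
    frobNorm (c • M) = |c| * frobNorm M := by
  unfold frobNorm frobSq
  have h : ∑ i, ∑ j, ((c • M) i j) ^ 2 = c ^ 2 * ∑ i, ∑ j, (M i j) ^ 2 := by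
    simp [Finset.mul_sum, mul_pow]
  rw [h, Real.sqrt_mul (sq_nonneg c), Real.sqrt_sq_eq_abs]

private lemma isSymm_comb {A B : Matrix (Fin n) (Fin n) ℝ} (hA : A.IsSymm) (hB : B.IsSymm)
    (a b : ℝ) : (a • A + b • B).IsSymm := by
  rw [Matrix.IsSymm, transpose_add, transpose_smul, transpose_smul, hA, hB]

end Aux

/-- The curve `γ(t) = exp((1−t)A + tB)` joins `exp A` to `exp B` through SPD matrices and is a
constant-speed path realizing the Log-Euclidean distance:
`d_LEM(γ(s), γ(t)) = |t − s| · ‖A − B‖_F = |t − s| · d_LEM(exp A, exp B)`. -/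
theorem logEuclidean_geodesic
    {n : ℕ} (A B : Matrix (Fin n) (Fin n) ℝ) (hA : A.IsSymm) (hB : B.IsSymm)
    (γ : ℝ → Matrix (Fin n) (Fin n) ℝ)
    (hγ : ∀ t : ℝ, γ t = NormedSpace.exp ((1 - t) • A + t • B)) :
    γ 0 = NormedSpace.exp A ∧ γ 1 = NormedSpace.exp B
    ∧ (∀ t : ℝ, (γ t).PosDef)
    ∧ (∀ s t : ℝ, dLEM (γ s) (γ t) = |t - s| * frobNorm (A - B)
        ∧ dLEM (γ s) (γ t) = |t - s| * dLEM (NormedSpace.exp A) (NormedSpace.exp B)) := by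
  have hlog : ∀ t : ℝ, symLog (γ t) = (1 - t) • A + t • B := fun t => by
    rw [hγ t]; exact symLog_exp (isSymm_comb hA hB _ _)
  have hAB : dLEM (NormedSpace.exp A) (NormedSpace.exp B) = frobNorm (A - B) := by
    rw [dLEM, symLog_exp hA, symLog_exp hB]
  have hmain : ∀ s t : ℝ, dLEM (γ s) (γ t) = |t - s| * frobNorm (A - B) := by
    intro s t
    rw [dLEM, hlog s, hlog t]
    have hd : ((1 - s) • A + s • B) - ((1 - t) • A + t • B) = (t - s) • (A - B) := by
      module
    rw [hd, frobNorm_smul]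
  refine ⟨?_, ?_, fun t => ?_, fun s t => ⟨hmain s t, by rw [hmain s t, hAB]⟩⟩
  · rw [hγ 0]; norm_num
  · rw [hγ 1]; norm_num
  · rw [hγ t]
    exact posDef_exp (isHermitian_of_isSymm (isSymm_comb hA hB _ _))
end

section
/- The set of n×n real symmetric positive definite matrices forms a commutative group under logarithmic multiplication S₁ ⊙ S₂ := exp(log S₁ + log S₂): the operation ⊙ maps pairs of SPD matrices to SPD matrices, is commutative and associative, the identity matrix Id is a two-sided identity (S ⊙ Id = S), and the matrix inverse is the group inverse (S ⊙ S⁻¹ = Id). -/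
open Matrix

/-- Logarithmic multiplication of SPD matrices: `P ⊙ S = exp(log P + log S)`. -/
noncomputable def odot {n : ℕ} (P S : Matrix (Fin n) (Fin n) ℝ) : Matrix (Fin n) (Fin n) ℝ :=
  NormedSpace.exp (symLog P + symLog S)

section Auxiliary

attribute [local instance] Matrix.instL2OpNormedRing Matrix.instL2OpNormedAlgebra

variable {n : ℕ}

lemma isSymm_iff_isSelfAdjoint' (A : Matrix (Fin n) (Fin n) ℝ) :
    A.IsSymm ↔ IsSelfAdjoint A := by
  rw [Matrix.IsSymm, ← conjTranspose_eq_transpose_of_trivial]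
  exact Iff.rfl

lemma spectrum_pos_of_posDef {S : Matrix (Fin n) (Fin n) ℝ} (hS : S.PosDef) :
    ∀ x ∈ spectrum ℝ S, 0 < x := by
  intro x hx
  rw [hS.isHermitian.spectrum_real_eq_range_eigenvalues] at hx
  obtain ⟨i, rfl⟩ := hx
  exact hS.eigenvalues_pos i

lemma posDef_selfAdjoint_of_posDef {S : Matrix (Fin n) (Fin n) ℝ} (hS : S.PosDef) :
    IsSelfAdjoint S := hS.isHermitian

/-- Existence of a symmetric logarithm for SPD matrices. -/
lemma exists_symLog {S : Matrix (Fin n) (Fin n) ℝ} (hS : S.PosDef) :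
    ∃ A : Matrix (Fin n) (Fin n) ℝ, A.IsSymm ∧ NormedSpace.exp A = S :=
  ⟨CFC.log S, (isSymm_iff_isSelfAdjoint' _).mpr (IsSelfAdjoint.log),
    (open scoped MatrixOrder in CFC.exp_log S hS.isStrictlyPositive)⟩

/-- Uniqueness of the symmetric logarithm. -/
lemma symLog_eq {A S : Matrix (Fin n) (Fin n) ℝ} (hA : A.IsSymm)
    (h : NormedSpace.exp A = S) : symLog S = A := by
  have hex : ∃ B : Matrix (Fin n) (Fin n) ℝ, B.IsSymm ∧ NormedSpace.exp B = S := ⟨A, hA, h⟩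
  have h1 := hex.choose_spec
  have e1 : CFC.log S = hex.choose := by
    conv_lhs => rw [← h1.2]
    rw [CFC.log_exp _ ((isSymm_iff_isSelfAdjoint' _).mp h1.1)]
  have e2 : CFC.log S = A := by
    rw [← h, CFC.log_exp _ ((isSymm_iff_isSelfAdjoint' _).mp hA)]
  simp only [symLog, dif_pos hex]
  rw [← e1, e2]

lemma symLog_isSymm {S : Matrix (Fin n) (Fin n) ℝ} (hS : S.PosDef) :
    (symLog S).IsSymm := by
  obtain ⟨A, hA, h⟩ := exists_symLog hS
  exact (symLog_eq hA h).symm ▸ hA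

lemma exp_symLog {S : Matrix (Fin n) (Fin n) ℝ} (hS : S.PosDef) :
    NormedSpace.exp (symLog S) = S := by
  obtain ⟨A, hA, h⟩ := exists_symLog hS
  exact (symLog_eq hA h).symm ▸ h

/-- The exponential of a real symmetric matrix is positive definite. -/
lemma posDef_exp_of_isSymm {A : Matrix (Fin n) (Fin n) ℝ} (hA : A.IsSymm) :
    (NormedSpace.exp A).PosDef := by
  have hhalf : ((1 / 2 : ℝ) • A).IsSymm := hA.smul _
  set B := NormedSpace.exp ((1 / 2 : ℝ) • A) with hBdef
  have hBsymm : B.IsSymm := hhalf.exp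
  have hBT : Bᴴ = B := by
    have h' : ((1 / 2 : ℝ) • A).IsHermitian := (isSymm_iff_isSelfAdjoint' _).mp hhalf
    rw [hBdef, ← Matrix.exp_conjTranspose, h'.eq]
  have hexp : NormedSpace.exp A = Bᴴ * B := by
    have hhalf2 : (1 / 2 : ℝ) • A + (1 / 2 : ℝ) • A = A := by module
    rw [hBT, hBdef, ← Matrix.exp_add_of_commute _ _ (Commute.refl _), hhalf2]
  have hBunit : IsUnit B := Matrix.isUnit_exp _
  have hBinj : Function.Injective B.mulVec := mulVec_injective_iff_isUnit.mpr hBunit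
  rw [hexp]
  refine PosDef.of_dotProduct_mulVec_pos (isHermitian_conjTranspose_mul_self B) fun x hx => ?_
  have hy : B *ᵥ x ≠ 0 := by
    intro h0
    apply hx
    have := hBinj (a₁ := x) (a₂ := 0) (by simpa using h0)
    simpa using this
  calc (0 : ℝ) < dotProduct (star (B *ᵥ x)) (B *ᵥ x) := dotProduct_star_self_pos_iff.mpr hy
    _ = dotProduct (star x) ((Bᴴ * B) *ᵥ x) := by
        rw [star_mulVec, ← dotProduct_mulVec, mulVec_mulVec]

end Auxiliary

/-- The SPD matrices form a commutative group under logarithmic multiplication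
`S₁ ⊙ S₂ = exp(log S₁ + log S₂)`: closure, commutativity, associativity, identity `Id`, and
inverses given by the matrix inverse. -/
theorem spd_commGroup_under_odot {n : ℕ} :
    (∀ S₁ S₂ : Matrix (Fin n) (Fin n) ℝ, S₁.PosDef → S₂.PosDef → (odot S₁ S₂).PosDef)
    ∧ (∀ S₁ S₂ : Matrix (Fin n) (Fin n) ℝ, S₁.PosDef → S₂.PosDef → odot S₁ S₂ = odot S₂ S₁)
    ∧ (∀ S₁ S₂ S₃ : Matrix (Fin n) (Fin n) ℝ, S₁.PosDef → S₂.PosDef → S₃.PosDef →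
        odot (odot S₁ S₂) S₃ = odot S₁ (odot S₂ S₃))
    ∧ (∀ S : Matrix (Fin n) (Fin n) ℝ, S.PosDef → odot S 1 = S)
    ∧ (∀ S : Matrix (Fin n) (Fin n) ℝ, S.PosDef → odot S S⁻¹ = 1) := by

  have odot_def : ∀ P S : Matrix (Fin n) (Fin n) ℝ,
      odot P S = NormedSpace.exp (symLog P + symLog S) := fun _ _ => rfl
  have key : ∀ S₁ S₂ : Matrix (Fin n) (Fin n) ℝ, S₁.PosDef → S₂.PosDef →
      symLog (odot S₁ S₂) = symLog S₁ + symLog S₂ := fun S₁ S₂ h₁ h₂ =>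
    symLog_eq ((symLog_isSymm h₁).add (symLog_isSymm h₂)) rfl
  refine ⟨?_, ?_, ?_, ?_, ?_⟩
  · intro S₁ S₂ h₁ h₂
    exact posDef_exp_of_isSymm ((symLog_isSymm h₁).add (symLog_isSymm h₂))
  · intro S₁ S₂ h₁ h₂
    unfold odot
    rw [add_comm]
  · intro S₁ S₂ S₃ h₁ h₂ h₃
    rw [odot_def (odot S₁ S₂) S₃, odot_def S₁ (odot S₂ S₃), key S₁ S₂ h₁ h₂,
      key S₂ S₃ h₂ h₃, add_assoc]
  · intro S hS
    have h1 : symLog (1 : Matrix (Fin n) (Fin n) ℝ) = 0 :=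
      symLog_eq (by simp [Matrix.IsSymm]) NormedSpace.exp_zero
    rw [odot, h1, add_zero, exp_symLog hS]
  · intro S hS
    have hinv : symLog S⁻¹ = -(symLog S) :=
      symLog_eq (symLog_isSymm hS).neg (by rw [Matrix.exp_neg, exp_symLog hS])
    rw [odot, hinv, add_neg_cancel, NormedSpace.exp_zero]
end
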